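/- Let $(Q_j)_{0 \le j \le k}$ and $(P_j)_{0 \le j \le k}$ be positive reals with $\max\{P_{j+1}, Q_{j+1}\} \le Q_j^{\widetilde{\beta}}$ for all $0 \le j < k$, where $\widetilde{\beta} > 1$ and all quantities are in $(0,1)$. If $\frac{3-\eta}{2} > \sum_{\ell=1}^{k-j} \widetilde{\beta}^{-\ell}$ for some $0 \le j < k$ and $\eta \in (0,1)$, and $C \ge 1$ with the $Q_i$ sufficiently small, then $C^{k-j} \frac{Q_k^{(1-\eta)/2} P_k}{Q_{k-1} Q_{k-2} \cdots Q_{j+1}} \le Q_j$. -/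

import Mathlib

open Finset

/-- Key inductive inequality in the pre-image propagation argument: if the widths
decay with exponent `β̃` and `(3−η)/2` dominates the geometric series, then for the
`Q i` sufficiently small, `C^(k−j) · Q k^((1−η)/2) · P k / (Q_{k-1} ⋯ Q_{j+1}) ≤ Q j`. -/
theorem stmt12 (βt η C : ℝ) (hβ : 1 < βt) (hη0 : 0 < η) (hη1 : η < 1) (hC : 1 ≤ C)
    (k j : ℕ) (hjk : j < k)
    (hsum : ∑ ℓ ∈ Finset.range (k - j), βt⁻¹ ^ (ℓ + 1) < (3 - η) / 2) :
    ∃ δ₀ : ℝ, 0 < δ₀ ∧ ∀ Q P : ℕ → ℝ,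
      (∀ i, i ≤ k → 0 < Q i ∧ Q i < 1) →
      (∀ i, i ≤ k → 0 < P i ∧ P i < 1) →
      (∀ i, i < k → max (P (i + 1)) (Q (i + 1)) ≤ Q i ^ βt) →
      (∀ i, i ≤ k → Q i ≤ δ₀) →
      C ^ (k - j) * (Q k ^ ((1 - η) / 2) * P k) / ∏ i ∈ Finset.Ioo j k, Q i ≤ Q j := by
  set n := k - j with hn
  have hn1 : 1 ≤ n := by omega
  have hβ0 : (0:ℝ) < βt := lt_trans one_pos hβ
  have hC0 : (0:ℝ) < C := lt_of_lt_of_le one_pos hC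
  set S : ℝ := ∑ ℓ ∈ Finset.range n, (βt⁻¹) ^ ℓ with hSdef
  have hSlt : S < βt * ((3 - η) / 2) := by
    have h1 : βt⁻¹ * S = ∑ ℓ ∈ Finset.range n, βt⁻¹ ^ (ℓ + 1) := by
      rw [hSdef, Finset.mul_sum]
      exact Finset.sum_congr rfl fun ℓ _ => by rw [pow_succ']
    have h2 : βt⁻¹ * S < (3 - η) / 2 := by rw [h1]; exact hsum
    have h3 := mul_lt_mul_of_pos_left h2 hβ0
    have h4 : βt * (βt⁻¹ * S) = S := by field_simp
    linarith
  set e : ℝ := βt * ((3 - η) / 2) - S with hedef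
  have he : 0 < e := sub_pos.mpr hSlt
  refine ⟨C ^ (-(n:ℝ)/e), Real.rpow_pos_of_pos hC0 _, ?_⟩
  intro Q P hQ hP hstep hδ
  have hk1 : k - 1 < k := by omega
  have hq0 : 0 < Q (k-1) := (hQ (k-1) (by omega)).1
  have hq1 : Q (k-1) < 1 := (hQ (k-1) (by omega)).2
  -- iterated decay
  have key : ∀ m i, i + m ≤ k → Q (i + m) ≤ Q i ^ ((βt ^ m : ℝ)) := by
    intro m
    induction m with
    | zero => intro i hi; simp
    | succ m ih =>
      intro i hi
      have h1 : Q (i+m+1) ≤ Q (i+m) ^ βt :=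
        le_trans (le_max_right _ _) (hstep (i+m) (by omega))
      have h2 : Q (i+m) ≤ Q i ^ ((βt ^ m : ℝ)) := ih i (by omega)
      calc Q (i + (m+1)) = Q (i+m+1) := by ring_nf
        _ ≤ Q (i+m) ^ βt := h1
        _ ≤ (Q i ^ ((βt^m : ℝ))) ^ βt :=
            Real.rpow_le_rpow (hQ (i+m) (by omega)).1.le h2 hβ0.le
        _ = Q i ^ ((βt^m : ℝ) * βt) := (Real.rpow_mul (hQ i (by omega)).1.le _ _).symm
        _ = Q i ^ ((βt^(m+1) : ℝ)) := by rw [pow_succ]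
  -- lower bound for each Q i in terms of Q (k-1)
  have hlow : ∀ i, j ≤ i → i ≤ k - 1 →
      Q (k-1) ^ ((βt⁻¹) ^ (k-1-i)) ≤ Q i := by
    intro i hji hik
    have hb : (0:ℝ) < βt ^ (k-1-i) := pow_pos hβ0 _
    have h := key (k-1-i) i (by omega)
    rw [show i + (k-1-i) = k-1 from by omega] at h
    rw [inv_pow]
    calc Q (k-1) ^ ((βt^(k-1-i) : ℝ))⁻¹
        ≤ (Q i ^ ((βt^(k-1-i) : ℝ))) ^ ((βt^(k-1-i) : ℝ))⁻¹ :=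
          Real.rpow_le_rpow hq0.le h (by positivity)
      _ = Q i := by
          rw [← Real.rpow_mul (hQ i (by omega)).1.le, mul_inv_cancel₀ hb.ne',
            Real.rpow_one]
  -- product lower bound
  have hsumIcc : ∑ i ∈ Finset.Icc j (k-1), (βt⁻¹) ^ (k-1-i) = S := by
    have hIcc : Finset.Icc j (k-1) = Finset.Ico j k := by
      ext i; simp [Finset.mem_Icc, Finset.mem_Ico]; omega
    rw [hIcc, Finset.sum_Ico_eq_sum_range]
    have hkj : k - j = n := rfl
    rw [hkj, hSdef]
    rw [← Finset.sum_range_reflect (fun ℓ => (βt⁻¹) ^ ℓ) n]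
    exact Finset.sum_congr rfl fun t ht => by
      congr 1
      have : t < n := Finset.mem_range.mp ht
      omega
  have hprod : Q (k-1) ^ S ≤ ∏ i ∈ Finset.Icc j (k-1), Q i := by
    calc Q (k-1) ^ S = ∏ i ∈ Finset.Icc j (k-1), Q (k-1) ^ ((βt⁻¹) ^ (k-1-i)) := by
          rw [← hsumIcc]; exact Real.rpow_sum_of_pos hq0 _ _
      _ ≤ ∏ i ∈ Finset.Icc j (k-1), Q i :=
          Finset.prod_le_prod (fun i _ => (Real.rpow_pos_of_pos hq0 _).le)
            (fun i hi => hlow i (Finset.mem_Icc.mp hi).1 (Finset.mem_Icc.mp hi).2)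
  -- split Q j off the product
  have hIoo : Finset.Ioo j k = Finset.Ioc j (k-1) := by
    ext i; simp [Finset.mem_Ioo, Finset.mem_Ioc]; omega
  have hsplit : Q j * ∏ i ∈ Finset.Ioo j k, Q i = ∏ i ∈ Finset.Icc j (k-1), Q i := by
    rw [hIoo, ← Finset.Ioc_insert_left (show j ≤ k-1 by omega),
      Finset.prod_insert Finset.left_notMem_Ioc]
  have hprodpos : 0 < ∏ i ∈ Finset.Ioo j k, Q i :=
    Finset.prod_pos fun i hi => (hQ i (by have := (Finset.mem_Ioo.mp hi).2; omega)).1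
  rw [div_le_iff₀ hprodpos]
  -- bound the numerator
  have hQk : Q k ≤ Q (k-1) ^ βt := by
    have := hstep (k-1) hk1
    rw [show k - 1 + 1 = k from by omega] at this
    exact le_trans (le_max_right _ _) this
  have hPk : P k ≤ Q (k-1) ^ βt := by
    have := hstep (k-1) hk1
    rw [show k - 1 + 1 = k from by omega] at this
    exact le_trans (le_max_left _ _) this
  have hnum : Q k ^ ((1 - η)/2) * P k ≤ Q (k-1) ^ (βt * ((3 - η)/2)) := by
    have h1 : Q k ^ ((1 - η)/2) ≤ Q (k-1) ^ (βt * ((1 - η)/2)) := by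
      calc Q k ^ ((1 - η)/2) ≤ (Q (k-1) ^ βt) ^ ((1 - η)/2) :=
            Real.rpow_le_rpow (hQ k le_rfl).1.le hQk (by linarith)
        _ = Q (k-1) ^ (βt * ((1 - η)/2)) := (Real.rpow_mul hq0.le _ _).symm
    have h2 := mul_le_mul h1 hPk (hP k le_rfl).1.le (Real.rpow_nonneg hq0.le _)
    calc Q k ^ ((1 - η)/2) * P k ≤ Q (k-1) ^ (βt * ((1 - η)/2)) * Q (k-1) ^ βt := h2
      _ = Q (k-1) ^ (βt * ((1 - η)/2) + βt) := (Real.rpow_add hq0 _ _).symm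
      _ = Q (k-1) ^ (βt * ((3 - η)/2)) := by ring_nf
  -- C^n ≤ Q (k-1) ^ (-e)
  have hCbound : (C : ℝ) ^ (k - j) ≤ Q (k-1) ^ (-e) := by
    have hqδ : Q (k-1) ≤ C ^ (-(n:ℝ)/e) := hδ (k-1) (by omega)
    have h1 : Q (k-1) ^ e ≤ (C ^ (-(n:ℝ)/e)) ^ e :=
      Real.rpow_le_rpow hq0.le hqδ he.le
    have h2 : (C ^ (-(n:ℝ)/e)) ^ e = (C ^ (n:ℝ))⁻¹ := by
      rw [← Real.rpow_mul hC0.le, div_mul_cancel₀ _ he.ne', Real.rpow_neg hC0.le]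
    rw [h2] at h1
    rw [show ((C:ℝ) ^ (k - j) : ℝ) = C ^ ((n:ℝ)) from (Real.rpow_natCast C n).symm,
      Real.rpow_neg hq0.le]
    calc C ^ ((n:ℝ)) = ((C ^ ((n:ℝ)))⁻¹)⁻¹ := (inv_inv _).symm
      _ ≤ (Q (k-1) ^ e)⁻¹ := inv_anti₀ (Real.rpow_pos_of_pos hq0 e) h1
  calc C ^ (k - j) * (Q k ^ ((1 - η)/2) * P k)
      ≤ Q (k-1) ^ (-e) * Q (k-1) ^ (βt * ((3 - η)/2)) := by
        exact mul_le_mul hCbound hnum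
          (mul_nonneg (Real.rpow_nonneg (hQ k le_rfl).1.le _) (hP k le_rfl).1.le)
          (Real.rpow_nonneg hq0.le _)
      _ = Q (k-1) ^ (-e + βt * ((3 - η)/2)) := (Real.rpow_add hq0 _ _).symm
      _ = Q (k-1) ^ S := by rw [hedef]; ring_nf
      _ ≤ ∏ i ∈ Finset.Icc j (k-1), Q i := hprod
      _ = Q j * ∏ i ∈ Finset.Ioo j k, Q i := hsplit.symm
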